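/- For every discrete field φ and every n ∈ ℤ, Q₊(n) = Q₋(n+1), where Q_±(n) = δ·Σ_{j ∈ ZMod N} T⁰⁰_±(n,j). In other words, with periodic boundary conditions the two discrete definitions of the total energy coincide, so the total energy at each time level is unambiguously defined. -/

import Mathlib

/-- `σ_n = 1` if `n` is odd, `−1` if `n` is even. -/
def sgm (n : ℤ) : ℤ := if Odd n then 1 else -1

/-- The two discrete energy densities `T⁰⁰_±` of the BDdV scheme
(`s = 1` gives `T⁰⁰₊`, `s = −1` gives `T⁰⁰₋`). -/
noncomputable def T00BDdV (N : ℕ) (δ : ℝ) (φ : ℤ → ZMod N → ℝ)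
    (s : ℤ) (n : ℤ) (j : ZMod N) : ℝ :=
  ((φ (n + s) j - φ n j)^2 + (φ (n + s) j - φ n (j + (sgm n : ZMod N)))^2) / (2 * δ^2)
    - 1/4
    + (1/8) * (1 + (φ (n + s) j)^2)
        * (2 + (φ n j)^2 + (φ n (j + (sgm n : ZMod N)))^2)

/-- The two discrete total energies `Q_±(n) = δ Σ_j T⁰⁰_±(n,j)`. -/
noncomputable def QBDdV (N : ℕ) [NeZero N] (δ : ℝ) (φ : ℤ → ZMod N → ℝ)
    (s : ℤ) (n : ℤ) : ℝ :=
  δ * ∑ j : ZMod N, T00BDdV N δ φ s n j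

noncomputable def auxC (δ x y : ℝ) : ℝ :=
  (x - y)^2 / (2 * δ^2) - 1/4 + (1/8) * (2 + x^2 + y^2 + x^2 * y^2)

noncomputable def auxU (δ x y : ℝ) : ℝ :=
  (x - y)^2 / (2 * δ^2) + (1/8) * (x^2 + y^2 + x^2 * y^2)

lemma sgm_succ (n : ℤ) : sgm (n + 1) = - sgm n := by
  have h2 : Odd (n + 1) ↔ ¬ Odd n := by
    rw [← Int.not_even_iff_odd, Int.even_add_one, not_not, ← Int.not_odd_iff_even]
  by_cases h : Odd n <;> simp [sgm, h2, h]

/-- With periodic boundary conditions the two discrete definitions of the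
total energy of the BDdV scheme coincide: `Q₊(n) = Q₋(n+1)`. -/
theorem QBDdV_plus_eq_minus_succ
    (N : ℕ) [NeZero N] (δ : ℝ) (hδ : 0 < δ)
    (φ : ℤ → ZMod N → ℝ) (n : ℤ) :
    QBDdV N δ φ 1 n = QBDdV N δ φ (-1) (n + 1) := by
  unfold QBDdV
  congr 1
  set σ : ZMod N := ((sgm n : ℤ) : ZMod N) with hσdef
  have hσ : ((sgm (n + 1) : ℤ) : ZMod N) = -σ := by
    rw [sgm_succ]; push_cast; ring
  set a : ZMod N → ℝ := φ (n + 1) with ha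
  set b : ZMod N → ℝ := φ n with hb
  have h1 : ∀ j, T00BDdV N δ φ 1 n j = auxC δ (a j) (b j) + auxU δ (a j) (b (j + σ)) := by
    intro j
    simp only [T00BDdV, auxC, auxU, ← ha, ← hb, ← hσdef]
    ring
  have h2 : ∀ j, T00BDdV N δ φ (-1) (n + 1) j
      = auxC δ (a j) (b j) + auxU δ (a (j - σ)) (b j) := by
    intro j
    have hn : n + 1 + (-1) = n := by ring
    simp only [T00BDdV, auxC, auxU, hσ, hn, ← ha, ← hb, sub_eq_add_neg]
    ring
  simp only [h1, h2, Finset.sum_add_distrib]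
  congr 1
  have := Equiv.sum_comp (Equiv.subRight σ)
    (fun j => auxU δ (a j) (b (j + σ)))
  rw [← this]
  apply Finset.sum_congr rfl
  intro j _
  simp [Equiv.subRight]
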